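/- Let (Ω, P) be a probability space, u : Ω → ℝ^L a random vector whose law is the probability measure μ on ℝ^L, ν ∈ L²(Ω, P), and ψ ∈ L²(ℝ^L, μ). Let f₁, …, f_{r−1}, g be nonzero elements of L²(ℝ^L, μ) (r ≥ 2), let M := span{f₁, …, f_{r−1}} with g ∉ M, and M' := M + span{g}. Define d := ψ(u) + ν, and assume E[f(u) ν] = 0 for every f ∈ M' and E[ψ(u) ν] = 0. Suppose the coherence of every pair of distinct vectors among {g, f₁, …, f_{r−1}} is at most δ, where δ ∈ [0, 1] satisfies (r − 1)δ < 1. Write P_{M'}(ψ) uniquely as P_{M'}(ψ) = m + h* g with m ∈ M and h* ∈ ℝ. Then E[(d − (P_M ψ)(u))²] − E[(d − (P_{M'} ψ)(u))²] ≥ (h*)² ‖g‖² ( 1 − (r − 1)δ² / (1 − (r − 2)δ) ). -/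

import Mathlib

open MeasureTheory RealInnerProductSpace

lemma stmt16_mul_int {Ω : Type*} [MeasurableSpace Ω] {P : Measure Ω} {a b : Ω → ℝ}
    (ha : MemLp a 2 P) (hb : MemLp b 2 P) :
    Integrable (fun ω => a ω * b ω) P := by
  refine (ha.integrable_sq.add hb.integrable_sq).mono' (ha.1.mul hb.1) ?_
  filter_upwards with ω
  have h : |a ω * b ω| ≤ a ω ^ 2 + b ω ^ 2 := by
    rw [abs_mul]
    nlinarith [sq_nonneg (|a ω| - |b ω|), sq_abs (a ω), sq_abs (b ω), abs_nonneg (a ω),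
      abs_nonneg (b ω)]
  simpa [Real.norm_eq_abs, abs_mul] using h

lemma stmt16_dist_bound {E : Type*} [NormedAddCommGroup E] [InnerProductSpace ℝ E]
    {n : ℕ} (f : Fin n → E) (g : E)
    (M : Submodule ℝ E) [M.HasOrthogonalProjection]
    (hM : M = Submodule.span ℝ (Set.range f))
    (δ : ℝ) (hδ0 : 0 ≤ δ)
    (hβ : 0 < 1 - ((n : ℝ) - 1) * δ)
    (hcoh1 : ∀ i, |⟪g, f i⟫| ≤ δ * (‖g‖ * ‖f i‖))
    (hcoh2 : ∀ i j, i ≠ j → |⟪f i, f j⟫| ≤ δ * (‖f i‖ * ‖f j‖)) :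
    ‖g‖ ^ 2 * (1 - (n : ℝ) * δ ^ 2 / (1 - ((n : ℝ) - 1) * δ))
      ≤ ‖g - M.orthogonalProjection g‖ ^ 2 := by
  set β : ℝ := 1 - ((n : ℝ) - 1) * δ with hβdef
  set p : E := (M.orthogonalProjection g : E) with hp
  have hpmem : p ∈ M := (M.orthogonalProjection g).2
  obtain ⟨c, hc⟩ : ∃ c : Fin n → ℝ, ∑ i, c i • f i = p := by
    rw [hM] at hpmem
    exact (Submodule.mem_span_range_iff_exists_fun ℝ).mp hpmem
  set a : Fin n → ℝ := fun i => |c i| * ‖f i‖ with hadef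
  have ha0 : ∀ i, 0 ≤ a i := fun i => mul_nonneg (abs_nonneg _) (norm_nonneg _)
  set s : ℝ := ∑ i, a i with hs
  set q : ℝ := ∑ i, a i ^ 2 with hq
  set t : ℝ := ‖p‖ ^ 2 with ht
  have ht0 : 0 ≤ t := sq_nonneg _
  -- t = ⟪g, p⟫
  have hinner0 : ⟪g - p, p⟫ = 0 := M.starProjection_inner_eq_zero g p hpmem
  have htgp : ⟪g, p⟫ = t := by
    have := inner_sub_left (𝕜 := ℝ) g p p
    rw [hinner0, real_inner_self_eq_norm_sq] at this
    linarith [this]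
  -- t ≤ δ ‖g‖ s
  have h1 : t ≤ δ * ‖g‖ * s := by
    rw [← htgp, ← hc, inner_sum]
    simp_rw [real_inner_smul_right]
    rw [hs, Finset.mul_sum]
    refine Finset.sum_le_sum fun i _ => ?_
    have h1i := hcoh1 i
    have : c i * ⟪g, f i⟫ ≤ |c i| * |⟪g, f i⟫| := by
      rw [← abs_mul]; exact le_abs_self _
    have h2i : |c i| * |⟪g, f i⟫| ≤ |c i| * (δ * (‖g‖ * ‖f i‖)) :=
      mul_le_mul_of_nonneg_left h1i (abs_nonneg _)
    calc c i * ⟪g, f i⟫ ≤ |c i| * (δ * (‖g‖ * ‖f i‖)) := le_trans this h2i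
      _ = δ * ‖g‖ * a i := by rw [hadef]; ring
  -- lower bound for t
  have h2 : (1 + δ) * q - δ * (s * s) ≤ t := by
    have hexp : t = ∑ i, ∑ j, c i * c j * ⟪f i, f j⟫ := by
      rw [ht, ← real_inner_self_eq_norm_sq, ← hc, sum_inner]
      refine Finset.sum_congr rfl fun i _ => ?_
      rw [real_inner_smul_left, inner_sum, Finset.mul_sum]
      refine Finset.sum_congr rfl fun j _ => ?_
      rw [real_inner_smul_right]; ring
    have hterm : ∀ i j, (1 + δ) * (if i = j then a i ^ 2 else 0) - δ * (a i * a j)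
        ≤ c i * c j * ⟪f i, f j⟫ := by
      intro i j
      by_cases hij : i = j
      · subst hij
        rw [if_pos rfl, real_inner_self_eq_norm_sq]
        have hceq : c i * c i * ‖f i‖ ^ 2 = a i ^ 2 := by
          rw [hadef]
          simp only [mul_pow, sq_abs]
          ring
        rw [hceq]
        have hsq : a i * a i = a i ^ 2 := (pow_two (a i)).symm
        rw [hsq]
        linarith
      · simp only [if_neg hij]
        have hcij := hcoh2 i j hij
        have habs : |c i * c j * ⟪f i, f j⟫| ≤ δ * (a i * a j) := by
          rw [abs_mul, abs_mul]
          have : |c i| * |c j| * |⟪f i, f j⟫| ≤ |c i| * |c j| * (δ * (‖f i‖ * ‖f j‖)) :=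
            mul_le_mul_of_nonneg_left hcij (by positivity)
          calc |c i| * |c j| * |⟪f i, f j⟫| ≤ |c i| * |c j| * (δ * (‖f i‖ * ‖f j‖)) := this
            _ = δ * (a i * a j) := by rw [hadef]; ring
        nlinarith [neg_abs_le (c i * c j * ⟪f i, f j⟫)]
    calc (1 + δ) * q - δ * (s * s)
        = ∑ i, ((1 + δ) * a i ^ 2 - δ * (a i * s)) := by
          rw [Finset.sum_sub_distrib, ← Finset.mul_sum, ← hq]
          congr 1
          rw [← Finset.mul_sum]
          congr 1
          rw [← Finset.sum_mul, ← hs]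
      _ = ∑ i, ∑ j, ((1 + δ) * (if i = j then a i ^ 2 else 0) - δ * (a i * a j)) := by
          refine Finset.sum_congr rfl fun i _ => ?_
          rw [Finset.sum_sub_distrib, ← Finset.mul_sum, ← Finset.mul_sum]
          congr 1
          · congr 1
            simp
          · congr 1
            rw [← Finset.mul_sum, ← hs]
      _ ≤ ∑ i, ∑ j, c i * c j * ⟪f i, f j⟫ :=
          Finset.sum_le_sum fun i _ => Finset.sum_le_sum fun j _ => hterm i j
      _ = t := hexp.symm
  -- Cauchy-Schwarz on coefficients
  have h3 : s ^ 2 ≤ (n : ℝ) * q := by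
    have h := sq_sum_le_card_mul_sum_sq (s := (Finset.univ : Finset (Fin n))) (f := a)
    rw [hs, hq]
    simpa using h
  have hn0 : (0 : ℝ) ≤ (n : ℝ) := Nat.cast_nonneg n
  have hβt : β * (s * s) ≤ (n : ℝ) * t := by
    have k1 := mul_le_mul_of_nonneg_left h2 hn0
    have k2 := mul_le_mul_of_nonneg_left h3 (by linarith : (0:ℝ) ≤ 1 + δ)
    have hss : s * s = s ^ 2 := (pow_two s).symm
    nlinarith [k1, k2]
  have h4 : t * β ≤ ‖g‖ ^ 2 * ((n : ℝ) * δ ^ 2) := by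
    rcases eq_or_lt_of_le ht0 with h | h
    · rw [← h]
      have : (0:ℝ) ≤ ‖g‖ ^ 2 * ((n : ℝ) * δ ^ 2) := by positivity
      linarith
    · refine le_of_mul_le_mul_right ?_ h
      have hts : t ^ 2 ≤ (δ * ‖g‖ * s) ^ 2 := by
        have hb : 0 ≤ δ * ‖g‖ * s := by
          have hs0 : 0 ≤ s := Finset.sum_nonneg fun i _ => ha0 i
          positivity
        exact pow_le_pow_left₀ ht0 h1 2
      have k3 := mul_le_mul_of_nonneg_left hts hβ.le
      have k4 := mul_le_mul_of_nonneg_left hβt (by positivity : (0:ℝ) ≤ δ ^ 2 * ‖g‖ ^ 2)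
      nlinarith [k3, k4]
  have h5 : t ≤ ‖g‖ ^ 2 * ((n : ℝ) * δ ^ 2) / β := (le_div_iff₀ hβ).mpr h4
  have hpyth : ‖g‖ ^ 2 = t + ‖g - p‖ ^ 2 := by
    have hiz : ⟪p, g - p⟫ = 0 := by rw [real_inner_comm]; exact hinner0
    have hns := norm_add_sq_eq_norm_sq_add_norm_sq_real hiz
    have hadd : p + (g - p) = g := by abel
    rw [hadd] at hns
    rw [ht, pow_two, pow_two, pow_two]
    exact hns
  have hring : ‖g‖ ^ 2 * (1 - (n : ℝ) * δ ^ 2 / β)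
      = ‖g‖ ^ 2 - ‖g‖ ^ 2 * ((n : ℝ) * δ ^ 2) / β := by ring
  linarith [h5, hpyth, hring]

lemma stmt16_integral_eq {Ω : Type*} [MeasurableSpace Ω] (P : Measure Ω) [IsProbabilityMeasure P]
    {L : ℕ} (μ : Measure (Fin L → ℝ)) [IsProbabilityMeasure μ]
    (u : Ω → (Fin L → ℝ)) (hu : Measurable u) (hlaw : P.map u = μ)
    (ν : Ω → ℝ) (hν : MemLp ν 2 P) (ψ h : Lp ℝ 2 μ)
    (hψν : ∫ ω, ψ (u ω) * ν ω ∂P = 0) (hhν : ∫ ω, h (u ω) * ν ω ∂P = 0) :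
    ∫ ω, (ψ (u ω) + ν ω - h (u ω)) ^ 2 ∂P = ‖ψ - h‖ ^ 2 + ∫ ω, ν ω ^ 2 ∂P := by
  have hmp : MeasurePreserving u P μ := ⟨hu, hlaw⟩
  have hψu : MemLp (fun ω => ψ (u ω)) 2 P := (Lp.memLp ψ).comp_measurePreserving hmp
  have hhu : MemLp (fun ω => h (u ω)) 2 P := (Lp.memLp h).comp_measurePreserving hmp
  set w : Lp ℝ 2 μ := ψ - h with hw
  have hwu : MemLp (fun ω => w (u ω)) 2 P := (Lp.memLp w).comp_measurePreserving hmp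
  have hae : (fun ω => w (u ω)) =ᵐ[P] fun ω => ψ (u ω) - h (u ω) := by
    have h1 : ⇑w =ᵐ[P.map u] (⇑ψ - ⇑h) := by rw [hlaw]; exact Lp.coeFn_sub ψ h
    have h2 := ae_eq_comp hu.aemeasurable h1
    filter_upwards [h2] with ω hω
    simpa using hω
  -- rewrite integrand
  have step1 : ∫ ω, (ψ (u ω) + ν ω - h (u ω)) ^ 2 ∂P
      = ∫ ω, (w (u ω) ^ 2 + 2 * (w (u ω) * ν ω) + ν ω ^ 2) ∂P := by
    refine integral_congr_ae ?_
    filter_upwards [hae] with ω hω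
    rw [hω]; ring
  have I1 : Integrable (fun ω => w (u ω) ^ 2) P := hwu.integrable_sq
  have I2 : Integrable (fun ω => 2 * (w (u ω) * ν ω)) P :=
    (stmt16_mul_int hwu hν).const_mul 2
  have I3 : Integrable (fun ω => ν ω ^ 2) P := hν.integrable_sq
  have I12 : Integrable (fun ω => w (u ω) ^ 2 + 2 * (w (u ω) * ν ω)) P := I1.add I2
  rw [step1, integral_add I12 I3, integral_add I1 I2]
  -- cross term vanishes
  have hcross : ∫ ω, 2 * (w (u ω) * ν ω) ∂P = 0 := by
    rw [integral_const_mul]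
    have : ∫ ω, w (u ω) * ν ω ∂P = ∫ ω, (ψ (u ω) * ν ω - h (u ω) * ν ω) ∂P := by
      refine integral_congr_ae ?_
      filter_upwards [hae] with ω hω
      rw [hω]; ring
    rw [this, integral_sub (stmt16_mul_int hψu hν) (stmt16_mul_int hhu hν), hψν, hhν]
    simp
  -- first term is the squared norm
  have hfirst : ∫ ω, w (u ω) ^ 2 ∂P = ‖w‖ ^ 2 := by
    have hwm : AEStronglyMeasurable (fun x => w x ^ 2) (P.map u) := by
      rw [hlaw]
      exact ((Lp.aestronglyMeasurable w).mul (Lp.aestronglyMeasurable w)).congr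
        (by filter_upwards with x; simp [pow_two])
    have hmap := integral_map (μ := P) hu.aemeasurable hwm
    rw [hlaw] at hmap
    rw [← hmap, ← real_inner_self_eq_norm_sq]
    rw [L2.inner_def]
    refine integral_congr_ae ?_
    filter_upwards with x
    simp [RCLike.inner_apply, pow_two]
  rw [hcross, hfirst]
  simp [hw]

set_option maxHeartbeats 1000000 in
/-- Combination of the coherence-to-ALD lemma with the MMSE-reduction proposition: if every
pair of distinct vectors among `{g, f₁, …, f_{r-1}}` has coherence at most `δ` with
`(r-1)δ < 1`, then enlarging the dictionary subspace `M = span{f₁,…,f_{r-1}}` to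
`M' = M + span{g}` reduces the MMSE by at least `(h*)²‖g‖²(1 - (r-1)δ²/(1-(r-2)δ))`. -/
theorem stmt16 {Ω : Type*} [MeasurableSpace Ω] (P : Measure Ω) [IsProbabilityMeasure P]
    {L : ℕ} (μ : Measure (Fin L → ℝ)) [IsProbabilityMeasure μ]
    (u : Ω → (Fin L → ℝ)) (hu : Measurable u) (hlaw : P.map u = μ)
    (ν : Ω → ℝ) (hν : MemLp ν 2 P)
    (ψ : Lp ℝ 2 μ) {r : ℕ} (hr : 2 ≤ r)
    (g : Lp ℝ 2 μ) (f : Fin (r - 1) → Lp ℝ 2 μ)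
    (hg : g ≠ 0) (hf : ∀ i, f i ≠ 0)
    (M M' : Submodule ℝ (Lp ℝ 2 μ)) [FiniteDimensional ℝ M] [FiniteDimensional ℝ M']
    (hM : M = Submodule.span ℝ (Set.range f)) (hgM : g ∉ M)
    (hM' : M' = M ⊔ Submodule.span ℝ {g})
    (d : Ω → ℝ) (hd : d = fun ω => ψ (u ω) + ν ω)
    (horth : ∀ h ∈ M', ∫ ω, (h : Lp ℝ 2 μ) (u ω) * ν ω ∂P = 0)
    (horthψ : ∫ ω, ψ (u ω) * ν ω ∂P = 0)
    (δ : ℝ) (hδ0 : 0 ≤ δ) (hδ1 : δ ≤ 1) (hδr : ((r : ℝ) - 1) * δ < 1)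
    (hcoh1 : ∀ i, |⟪g, f i⟫| / (‖g‖ * ‖f i‖) ≤ δ)
    (hcoh2 : ∀ i j, i ≠ j → |⟪f i, f j⟫| / (‖f i‖ * ‖f j‖) ≤ δ)
    (m : Lp ℝ 2 μ) (hm : m ∈ M) (hstar : ℝ)
    (hdecomp : (M'.orthogonalProjection ψ : Lp ℝ 2 μ) = m + hstar • g) :
    hstar ^ 2 * ‖g‖ ^ 2 * (1 - ((r : ℝ) - 1) * δ ^ 2 / (1 - ((r : ℝ) - 2) * δ))
      ≤ (∫ ω, (d ω - (M.orthogonalProjection ψ : Lp ℝ 2 μ) (u ω)) ^ 2 ∂P)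
        - ∫ ω, (d ω - (M'.orthogonalProjection ψ : Lp ℝ 2 μ) (u ω)) ^ 2 ∂P := by
  subst hd
  beta_reduce
  set pM : Lp ℝ 2 μ := (M.orthogonalProjection ψ : Lp ℝ 2 μ) with hpM
  set pM' : Lp ℝ 2 μ := (M'.orthogonalProjection ψ : Lp ℝ 2 μ) with hpM'
  have hMle : M ≤ M' := by rw [hM']; exact le_sup_left
  have hpMmem : pM ∈ M := (M.orthogonalProjection ψ).2
  have hpM'mem : pM' ∈ M' := (M'.orthogonalProjection ψ).2
  have e1 := stmt16_integral_eq P μ u hu hlaw ν hν ψ pM horthψ (horth pM (hMle hpMmem))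
  have e2 := stmt16_integral_eq P μ u hu hlaw ν hν ψ pM' horthψ (horth pM' hpM'mem)
  rw [e1, e2]
  -- Pythagoras split
  have hsplit : ‖ψ - pM‖ ^ 2 = ‖ψ - pM'‖ ^ 2 + ‖pM' - pM‖ ^ 2 := by
    have hmemd : pM' - pM ∈ M' := Submodule.sub_mem _ hpM'mem (hMle hpMmem)
    have hiz : ⟪ψ - pM', pM' - pM⟫ = 0 := M'.starProjection_inner_eq_zero ψ _ hmemd
    have hns := norm_add_sq_eq_norm_sq_add_norm_sq_real hiz
    have hadd : (ψ - pM') + (pM' - pM) = ψ - pM := by abel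
    rw [hadd] at hns
    rw [pow_two, pow_two, pow_two]
    exact hns
  set pg : Lp ℝ 2 μ := (M.orthogonalProjection g : Lp ℝ 2 μ) with hpg
  have hmin : ∀ y ∈ M, ‖g - pg‖ ^ 2 ≤ ‖g - y‖ ^ 2 := by
    intro y hy
    have hmem2 : pg - y ∈ M := Submodule.sub_mem _ (M.orthogonalProjection g).2 hy
    have hiz : ⟪g - pg, pg - y⟫ = 0 := M.starProjection_inner_eq_zero g _ hmem2
    have hns := norm_add_sq_eq_norm_sq_add_norm_sq_real hiz
    have hadd : (g - pg) + (pg - y) = g - y := by abel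
    rw [hadd] at hns
    rw [pow_two, pow_two, hns]
    nlinarith [mul_self_nonneg ‖pg - y‖]
  have hgeom : hstar ^ 2 * ‖g - pg‖ ^ 2 ≤ ‖pM' - pM‖ ^ 2 := by
    rcases eq_or_ne hstar 0 with h0 | h0
    · rw [h0]
      simpa using sq_nonneg ‖pM' - pM‖
    · set z : Lp ℝ 2 μ := m - pM with hz
      have hzmem : z ∈ M := Submodule.sub_mem _ hm hpMmem
      set y : Lp ℝ 2 μ := (-(hstar⁻¹)) • z with hy
      have hymem : y ∈ M := Submodule.smul_mem _ _ hzmem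
      have hss : hstar • y = -z := by
        rw [hy, smul_smul, mul_neg, mul_inv_cancel₀ h0, neg_smul, one_smul]
      have heq : pM' - pM = hstar • (g - y) := by
        rw [smul_sub, hss, hdecomp, hz]
        abel
      rw [heq, norm_smul, Real.norm_eq_abs, mul_pow, sq_abs]
      exact mul_le_mul_of_nonneg_left (hmin y hymem) (sq_nonneg hstar)
  -- coherence bound
  have hnormg : 0 < ‖g‖ := norm_pos_iff.mpr hg
  have hcoh1' : ∀ i, |⟪g, f i⟫| ≤ δ * (‖g‖ * ‖f i‖) := by
    intro i
    have hfi : 0 < ‖f i‖ := norm_pos_iff.mpr (hf i)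
    have h := hcoh1 i
    rw [div_le_iff₀ (by positivity)] at h
    linarith [h]
  have hcoh2' : ∀ i j, i ≠ j → |⟪f i, f j⟫| ≤ δ * (‖f i‖ * ‖f j‖) := by
    intro i j hij
    have hfi : 0 < ‖f i‖ := norm_pos_iff.mpr (hf i)
    have hfj : 0 < ‖f j‖ := norm_pos_iff.mpr (hf j)
    have h := hcoh2 i j hij
    rw [div_le_iff₀ (by positivity)] at h
    linarith [h]
  have hcast : ((r - 1 : ℕ) : ℝ) = (r : ℝ) - 1 := by
    rw [Nat.cast_sub (by omega : 1 ≤ r), Nat.cast_one]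
  have hβ : 0 < 1 - (((r - 1 : ℕ) : ℝ) - 1) * δ := by
    rw [hcast]
    nlinarith [hδ0, hδr]
  have hdb := stmt16_dist_bound f g M hM δ hδ0 hβ hcoh1' hcoh2'
  rw [hcast] at hdb
  have hc2 : (r : ℝ) - 1 - 1 = (r : ℝ) - 2 := by ring
  rw [hc2] at hdb
  have hfinal : hstar ^ 2 * ‖g‖ ^ 2 * (1 - ((r : ℝ) - 1) * δ ^ 2 / (1 - ((r : ℝ) - 2) * δ))
      ≤ ‖pM' - pM‖ ^ 2 := by
    calc hstar ^ 2 * ‖g‖ ^ 2 * (1 - ((r : ℝ) - 1) * δ ^ 2 / (1 - ((r : ℝ) - 2) * δ))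
        = hstar ^ 2 * (‖g‖ ^ 2 * (1 - ((r : ℝ) - 1) * δ ^ 2 / (1 - ((r : ℝ) - 2) * δ))) := by
          ring
      _ ≤ hstar ^ 2 * ‖g - pg‖ ^ 2 := mul_le_mul_of_nonneg_left hdb (sq_nonneg _)
      _ ≤ ‖pM' - pM‖ ^ 2 := hgeom
  linarith [hsplit, hfinal]
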